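/- The Clifford algebra of the 4-dimensional real vector space ℝ⁴ equipped with the negative-definite quadratic form Q(v) = −‖v‖² (so that generators satisfy eᵢ² = −1 and eᵢeⱼ = −eⱼeᵢ for i ≠ j) is isomorphic as an ℝ-algebra to the algebra M₂(ℍ) of 2×2 matrices with quaternion entries. -/

import Mathlib

noncomputable section

open Quaternion Matrix CliffordAlgebra Module Submodule

/-- The negative-definite quadratic form `Q(v) = −‖v‖²` on `ℝ⁴`. -/
def Qneg : QuadraticForm ℝ (EuclideanSpace ℝ (Fin 4)) :=
  -(LinearMap.BilinMap.toQuadraticMap (innerₗ _ : LinearMap.BilinForm ℝ (EuclideanSpace ℝ (Fin 4))))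

namespace CliffR4

abbrev M2H := Matrix (Fin 2) (Fin 2) ℍ[ℝ]

lemma Qneg_apply (v : EuclideanSpace ℝ (Fin 4)) : Qneg v = -∑ i, v i * v i := by
  simp [Qneg, EuclideanSpace.real_norm_sq_eq, ← sq]

lemma Qneg_norm (v : EuclideanSpace ℝ (Fin 4)) : Qneg v = -‖v‖ ^ 2 := by
  rw [Qneg_apply, EuclideanSpace.norm_eq, Real.sq_sqrt (by positivity)]
  simp [sq]

def qI : ℍ[ℝ] := ⟨0,1,0,0⟩
def qJ : ℍ[ℝ] := ⟨0,0,1,0⟩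
def qK : ℍ[ℝ] := ⟨0,0,0,1⟩

def γ : Fin 4 → M2H
  | 0 => !![0, 1; -1, 0]
  | 1 => !![0, qI; qI, 0]
  | 2 => !![0, qJ; qJ, 0]
  | 3 => !![0, qK; qK, 0]

def f : EuclideanSpace ℝ (Fin 4) →ₗ[ℝ] M2H where
  toFun v := ∑ i, v i • γ i
  map_add' x y := by
    simp [PiLp.add_apply, add_smul, Finset.sum_add_distrib]
  map_smul' c x := by
    simp [PiLp.smul_apply, smul_smul, Finset.smul_sum]

def qv (v : EuclideanSpace ℝ (Fin 4)) : ℍ[ℝ] := ⟨v 0, v 1, v 2, v 3⟩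

lemma f_apply (v : EuclideanSpace ℝ (Fin 4)) :
    f v = !![0, qv v; -star (qv v), 0] := by
  show ∑ i, v i • γ i = _
  rw [Fin.sum_univ_four]
  refine Matrix.ext fun i j => ?_
  fin_cases i <;> fin_cases j <;>
    · apply QuaternionAlgebra.ext <;> simp [γ] <;> simp [qI, qJ, qK, qv]

lemma hf (v : EuclideanSpace ℝ (Fin 4)) :
    f v * f v = algebraMap ℝ M2H (Qneg v) := by
  rw [f_apply, Qneg_apply, Matrix.algebraMap_eq_diagonal]
  refine Matrix.ext fun i j => ?_
  fin_cases i <;> fin_cases j <;>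
    simp [Matrix.mul_apply, Fin.sum_univ_two, Pi.algebraMap_apply,
      Quaternion.self_mul_star, Quaternion.star_mul_self, Fin.sum_univ_four,
      Quaternion.normSq_def'] <;>
    · norm_cast
      apply QuaternionAlgebra.ext <;> simp [sq, qv] <;> ring

/-- the algebra morphism -/
def F : CliffordAlgebra Qneg →ₐ[ℝ] M2H := CliffordAlgebra.lift Qneg ⟨f, hf⟩

def ee (i : Fin 4) : EuclideanSpace ℝ (Fin 4) := EuclideanSpace.single i 1

def a (i : Fin 4) : CliffordAlgebra Qneg := ι Qneg (ee i)

lemma ee_apply (i j : Fin 4) : ee i j = if j = i then 1 else 0 := by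
  simp [ee, EuclideanSpace.single_apply]

lemma a_sq (i : Fin 4) : a i * a i = -1 := by
  rw [a, ι_sq_scalar, Qneg_apply]
  have : ∑ j, ee i j * ee i j = 1 := by
    simp [ee_apply, Finset.sum_ite_eq]
  rw [this]
  simp

lemma a_swap {i j : Fin 4} (h : j ≠ i) : a j * a i = -(a i * a j) := by
  have hp : a i * a j + a j * a i = algebraMap ℝ _ (QuadraticMap.polar Qneg (ee i) (ee j)) :=
    ι_mul_ι_add_swap _ _
  have hz : QuadraticMap.polar Qneg (ee i) (ee j) = 0 := by
    simp only [QuadraticMap.polar, Qneg_apply]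
    have h1 : ∀ k, (ee i + ee j) k = ee i k + ee j k := fun k => rfl
    simp only [h1, ee_apply]
    have h2 : ∀ x : Fin 4, ((if x = i then (1:ℝ) else 0) + if x = j then 1 else 0) *
        ((if x = i then 1 else 0) + if x = j then 1 else 0) =
        (if x = i then 1 else 0) * (if x = i then 1 else 0) +
        (if x = j then 1 else 0) * (if x = j then 1 else 0) := by
      intro x
      split_ifs with h3 h4 <;> simp_all <;> ring
    rw [Finset.sum_congr rfl fun x _ => h2 x, Finset.sum_add_distrib]
    ring
  rw [hz, map_zero] at hp
  exact eq_neg_of_add_eq_zero_right hp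

lemma sq0 (x : CliffordAlgebra Qneg) : a 0 * (a 0 * x) = -x := by
  rw [← mul_assoc, a_sq]; simp

lemma sq1 (x : CliffordAlgebra Qneg) : a 1 * (a 1 * x) = -x := by
  rw [← mul_assoc, a_sq]; simp

lemma sq2 (x : CliffordAlgebra Qneg) : a 2 * (a 2 * x) = -x := by
  rw [← mul_assoc, a_sq]; simp

lemma sq3 (x : CliffordAlgebra Qneg) : a 3 * (a 3 * x) = -x := by
  rw [← mul_assoc, a_sq]; simp

lemma sw10 : a 1 * a 0 = -(a 0 * a 1) := a_swap (by decide)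

lemma sw10x (x : CliffordAlgebra Qneg) : a 1 * (a 0 * x) = -(a 0 * (a 1 * x)) := by
  rw [← mul_assoc, sw10, neg_mul, mul_assoc]

lemma sw20 : a 2 * a 0 = -(a 0 * a 2) := a_swap (by decide)

lemma sw20x (x : CliffordAlgebra Qneg) : a 2 * (a 0 * x) = -(a 0 * (a 2 * x)) := by
  rw [← mul_assoc, sw20, neg_mul, mul_assoc]

lemma sw30 : a 3 * a 0 = -(a 0 * a 3) := a_swap (by decide)

lemma sw30x (x : CliffordAlgebra Qneg) : a 3 * (a 0 * x) = -(a 0 * (a 3 * x)) := by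
  rw [← mul_assoc, sw30, neg_mul, mul_assoc]

lemma sw21 : a 2 * a 1 = -(a 1 * a 2) := a_swap (by decide)

lemma sw21x (x : CliffordAlgebra Qneg) : a 2 * (a 1 * x) = -(a 1 * (a 2 * x)) := by
  rw [← mul_assoc, sw21, neg_mul, mul_assoc]

lemma sw31 : a 3 * a 1 = -(a 1 * a 3) := a_swap (by decide)

lemma sw31x (x : CliffordAlgebra Qneg) : a 3 * (a 1 * x) = -(a 1 * (a 3 * x)) := by
  rw [← mul_assoc, sw31, neg_mul, mul_assoc]

lemma sw32 : a 3 * a 2 = -(a 2 * a 3) := a_swap (by decide)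

lemma sw32x (x : CliffordAlgebra Qneg) : a 3 * (a 2 * x) = -(a 2 * (a 3 * x)) := by
  rw [← mul_assoc, sw32, neg_mul, mul_assoc]

def g : Fin 16 → CliffordAlgebra Qneg :=
  ![1, a 0, a 1, a 2, a 3, a 0 * a 1, a 0 * a 2, a 0 * a 3, a 1 * a 2, a 1 * a 3, a 2 * a 3, a 0 * (a 1 * a 2), a 0 * (a 1 * a 3), a 0 * (a 2 * a 3), a 1 * (a 2 * a 3), a 0 * (a 1 * (a 2 * a 3))]

def P : Submodule ℝ (CliffordAlgebra Qneg) := Submodule.span ℝ (Set.range g)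

lemma g_mem (i : Fin 16) : g i ∈ P := Submodule.subset_span ⟨i, rfl⟩

lemma a0_mul_g_mem (k : Fin 16) : a 0 * g k ∈ P := by
  fin_cases k
  · show a 0 * (1) ∈ P
    simp only [a_sq, sq0, sq1, sq2, sq3, sw10x, sw20x, sw30x, sw21x, sw31x, sw32x, sw10, sw20, sw30, sw21, sw31, sw32, mul_assoc, mul_one, one_mul, mul_neg, neg_mul, neg_neg]
    exact g_mem 1
  · show a 0 * (a 0) ∈ P
    simp only [a_sq, sq0, sq1, sq2, sq3, sw10x, sw20x, sw30x, sw21x, sw31x, sw32x, sw10, sw20, sw30, sw21, sw31, sw32, mul_assoc, mul_one, one_mul, mul_neg, neg_mul, neg_neg]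
    exact P.neg_mem (g_mem 0)
  · show a 0 * (a 1) ∈ P
    exact g_mem 5
  · show a 0 * (a 2) ∈ P
    exact g_mem 6
  · show a 0 * (a 3) ∈ P
    exact g_mem 7
  · show a 0 * (a 0 * a 1) ∈ P
    simp only [a_sq, sq0, sq1, sq2, sq3, sw10x, sw20x, sw30x, sw21x, sw31x, sw32x, sw10, sw20, sw30, sw21, sw31, sw32, mul_assoc, mul_one, one_mul, mul_neg, neg_mul, neg_neg]
    exact P.neg_mem (g_mem 2)
  · show a 0 * (a 0 * a 2) ∈ P
    simp only [a_sq, sq0, sq1, sq2, sq3, sw10x, sw20x, sw30x, sw21x, sw31x, sw32x, sw10, sw20, sw30, sw21, sw31, sw32, mul_assoc, mul_one, one_mul, mul_neg, neg_mul, neg_neg]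
    exact P.neg_mem (g_mem 3)
  · show a 0 * (a 0 * a 3) ∈ P
    simp only [a_sq, sq0, sq1, sq2, sq3, sw10x, sw20x, sw30x, sw21x, sw31x, sw32x, sw10, sw20, sw30, sw21, sw31, sw32, mul_assoc, mul_one, one_mul, mul_neg, neg_mul, neg_neg]
    exact P.neg_mem (g_mem 4)
  · show a 0 * (a 1 * a 2) ∈ P
    exact g_mem 11
  · show a 0 * (a 1 * a 3) ∈ P
    exact g_mem 12
  · show a 0 * (a 2 * a 3) ∈ P
    exact g_mem 13
  · show a 0 * (a 0 * (a 1 * a 2)) ∈ P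
    simp only [a_sq, sq0, sq1, sq2, sq3, sw10x, sw20x, sw30x, sw21x, sw31x, sw32x, sw10, sw20, sw30, sw21, sw31, sw32, mul_assoc, mul_one, one_mul, mul_neg, neg_mul, neg_neg]
    exact P.neg_mem (g_mem 8)
  · show a 0 * (a 0 * (a 1 * a 3)) ∈ P
    simp only [a_sq, sq0, sq1, sq2, sq3, sw10x, sw20x, sw30x, sw21x, sw31x, sw32x, sw10, sw20, sw30, sw21, sw31, sw32, mul_assoc, mul_one, one_mul, mul_neg, neg_mul, neg_neg]
    exact P.neg_mem (g_mem 9)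
  · show a 0 * (a 0 * (a 2 * a 3)) ∈ P
    simp only [a_sq, sq0, sq1, sq2, sq3, sw10x, sw20x, sw30x, sw21x, sw31x, sw32x, sw10, sw20, sw30, sw21, sw31, sw32, mul_assoc, mul_one, one_mul, mul_neg, neg_mul, neg_neg]
    exact P.neg_mem (g_mem 10)
  · show a 0 * (a 1 * (a 2 * a 3)) ∈ P
    exact g_mem 15
  · show a 0 * (a 0 * (a 1 * (a 2 * a 3))) ∈ P
    simp only [a_sq, sq0, sq1, sq2, sq3, sw10x, sw20x, sw30x, sw21x, sw31x, sw32x, sw10, sw20, sw30, sw21, sw31, sw32, mul_assoc, mul_one, one_mul, mul_neg, neg_mul, neg_neg]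
    exact P.neg_mem (g_mem 14)

lemma a1_mul_g_mem (k : Fin 16) : a 1 * g k ∈ P := by
  fin_cases k
  · show a 1 * (1) ∈ P
    simp only [a_sq, sq0, sq1, sq2, sq3, sw10x, sw20x, sw30x, sw21x, sw31x, sw32x, sw10, sw20, sw30, sw21, sw31, sw32, mul_assoc, mul_one, one_mul, mul_neg, neg_mul, neg_neg]
    exact g_mem 2
  · show a 1 * (a 0) ∈ P
    simp only [a_sq, sq0, sq1, sq2, sq3, sw10x, sw20x, sw30x, sw21x, sw31x, sw32x, sw10, sw20, sw30, sw21, sw31, sw32, mul_assoc, mul_one, one_mul, mul_neg, neg_mul, neg_neg]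
    exact P.neg_mem (g_mem 5)
  · show a 1 * (a 1) ∈ P
    simp only [a_sq, sq0, sq1, sq2, sq3, sw10x, sw20x, sw30x, sw21x, sw31x, sw32x, sw10, sw20, sw30, sw21, sw31, sw32, mul_assoc, mul_one, one_mul, mul_neg, neg_mul, neg_neg]
    exact P.neg_mem (g_mem 0)
  · show a 1 * (a 2) ∈ P
    exact g_mem 8
  · show a 1 * (a 3) ∈ P
    exact g_mem 9
  · show a 1 * (a 0 * a 1) ∈ P
    simp only [a_sq, sq0, sq1, sq2, sq3, sw10x, sw20x, sw30x, sw21x, sw31x, sw32x, sw10, sw20, sw30, sw21, sw31, sw32, mul_assoc, mul_one, one_mul, mul_neg, neg_mul, neg_neg]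
    exact g_mem 1
  · show a 1 * (a 0 * a 2) ∈ P
    simp only [a_sq, sq0, sq1, sq2, sq3, sw10x, sw20x, sw30x, sw21x, sw31x, sw32x, sw10, sw20, sw30, sw21, sw31, sw32, mul_assoc, mul_one, one_mul, mul_neg, neg_mul, neg_neg]
    exact P.neg_mem (g_mem 11)
  · show a 1 * (a 0 * a 3) ∈ P
    simp only [a_sq, sq0, sq1, sq2, sq3, sw10x, sw20x, sw30x, sw21x, sw31x, sw32x, sw10, sw20, sw30, sw21, sw31, sw32, mul_assoc, mul_one, one_mul, mul_neg, neg_mul, neg_neg]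
    exact P.neg_mem (g_mem 12)
  · show a 1 * (a 1 * a 2) ∈ P
    simp only [a_sq, sq0, sq1, sq2, sq3, sw10x, sw20x, sw30x, sw21x, sw31x, sw32x, sw10, sw20, sw30, sw21, sw31, sw32, mul_assoc, mul_one, one_mul, mul_neg, neg_mul, neg_neg]
    exact P.neg_mem (g_mem 3)
  · show a 1 * (a 1 * a 3) ∈ P
    simp only [a_sq, sq0, sq1, sq2, sq3, sw10x, sw20x, sw30x, sw21x, sw31x, sw32x, sw10, sw20, sw30, sw21, sw31, sw32, mul_assoc, mul_one, one_mul, mul_neg, neg_mul, neg_neg]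
    exact P.neg_mem (g_mem 4)
  · show a 1 * (a 2 * a 3) ∈ P
    exact g_mem 14
  · show a 1 * (a 0 * (a 1 * a 2)) ∈ P
    simp only [a_sq, sq0, sq1, sq2, sq3, sw10x, sw20x, sw30x, sw21x, sw31x, sw32x, sw10, sw20, sw30, sw21, sw31, sw32, mul_assoc, mul_one, one_mul, mul_neg, neg_mul, neg_neg]
    exact g_mem 6
  · show a 1 * (a 0 * (a 1 * a 3)) ∈ P
    simp only [a_sq, sq0, sq1, sq2, sq3, sw10x, sw20x, sw30x, sw21x, sw31x, sw32x, sw10, sw20, sw30, sw21, sw31, sw32, mul_assoc, mul_one, one_mul, mul_neg, neg_mul, neg_neg]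
    exact g_mem 7
  · show a 1 * (a 0 * (a 2 * a 3)) ∈ P
    simp only [a_sq, sq0, sq1, sq2, sq3, sw10x, sw20x, sw30x, sw21x, sw31x, sw32x, sw10, sw20, sw30, sw21, sw31, sw32, mul_assoc, mul_one, one_mul, mul_neg, neg_mul, neg_neg]
    exact P.neg_mem (g_mem 15)
  · show a 1 * (a 1 * (a 2 * a 3)) ∈ P
    simp only [a_sq, sq0, sq1, sq2, sq3, sw10x, sw20x, sw30x, sw21x, sw31x, sw32x, sw10, sw20, sw30, sw21, sw31, sw32, mul_assoc, mul_one, one_mul, mul_neg, neg_mul, neg_neg]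
    exact P.neg_mem (g_mem 10)
  · show a 1 * (a 0 * (a 1 * (a 2 * a 3))) ∈ P
    simp only [a_sq, sq0, sq1, sq2, sq3, sw10x, sw20x, sw30x, sw21x, sw31x, sw32x, sw10, sw20, sw30, sw21, sw31, sw32, mul_assoc, mul_one, one_mul, mul_neg, neg_mul, neg_neg]
    exact g_mem 13

lemma a2_mul_g_mem (k : Fin 16) : a 2 * g k ∈ P := by
  fin_cases k
  · show a 2 * (1) ∈ P
    simp only [a_sq, sq0, sq1, sq2, sq3, sw10x, sw20x, sw30x, sw21x, sw31x, sw32x, sw10, sw20, sw30, sw21, sw31, sw32, mul_assoc, mul_one, one_mul, mul_neg, neg_mul, neg_neg]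
    exact g_mem 3
  · show a 2 * (a 0) ∈ P
    simp only [a_sq, sq0, sq1, sq2, sq3, sw10x, sw20x, sw30x, sw21x, sw31x, sw32x, sw10, sw20, sw30, sw21, sw31, sw32, mul_assoc, mul_one, one_mul, mul_neg, neg_mul, neg_neg]
    exact P.neg_mem (g_mem 6)
  · show a 2 * (a 1) ∈ P
    simp only [a_sq, sq0, sq1, sq2, sq3, sw10x, sw20x, sw30x, sw21x, sw31x, sw32x, sw10, sw20, sw30, sw21, sw31, sw32, mul_assoc, mul_one, one_mul, mul_neg, neg_mul, neg_neg]
    exact P.neg_mem (g_mem 8)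
  · show a 2 * (a 2) ∈ P
    simp only [a_sq, sq0, sq1, sq2, sq3, sw10x, sw20x, sw30x, sw21x, sw31x, sw32x, sw10, sw20, sw30, sw21, sw31, sw32, mul_assoc, mul_one, one_mul, mul_neg, neg_mul, neg_neg]
    exact P.neg_mem (g_mem 0)
  · show a 2 * (a 3) ∈ P
    exact g_mem 10
  · show a 2 * (a 0 * a 1) ∈ P
    simp only [a_sq, sq0, sq1, sq2, sq3, sw10x, sw20x, sw30x, sw21x, sw31x, sw32x, sw10, sw20, sw30, sw21, sw31, sw32, mul_assoc, mul_one, one_mul, mul_neg, neg_mul, neg_neg]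
    exact g_mem 11
  · show a 2 * (a 0 * a 2) ∈ P
    simp only [a_sq, sq0, sq1, sq2, sq3, sw10x, sw20x, sw30x, sw21x, sw31x, sw32x, sw10, sw20, sw30, sw21, sw31, sw32, mul_assoc, mul_one, one_mul, mul_neg, neg_mul, neg_neg]
    exact g_mem 1
  · show a 2 * (a 0 * a 3) ∈ P
    simp only [a_sq, sq0, sq1, sq2, sq3, sw10x, sw20x, sw30x, sw21x, sw31x, sw32x, sw10, sw20, sw30, sw21, sw31, sw32, mul_assoc, mul_one, one_mul, mul_neg, neg_mul, neg_neg]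
    exact P.neg_mem (g_mem 13)
  · show a 2 * (a 1 * a 2) ∈ P
    simp only [a_sq, sq0, sq1, sq2, sq3, sw10x, sw20x, sw30x, sw21x, sw31x, sw32x, sw10, sw20, sw30, sw21, sw31, sw32, mul_assoc, mul_one, one_mul, mul_neg, neg_mul, neg_neg]
    exact g_mem 2
  · show a 2 * (a 1 * a 3) ∈ P
    simp only [a_sq, sq0, sq1, sq2, sq3, sw10x, sw20x, sw30x, sw21x, sw31x, sw32x, sw10, sw20, sw30, sw21, sw31, sw32, mul_assoc, mul_one, one_mul, mul_neg, neg_mul, neg_neg]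
    exact P.neg_mem (g_mem 14)
  · show a 2 * (a 2 * a 3) ∈ P
    simp only [a_sq, sq0, sq1, sq2, sq3, sw10x, sw20x, sw30x, sw21x, sw31x, sw32x, sw10, sw20, sw30, sw21, sw31, sw32, mul_assoc, mul_one, one_mul, mul_neg, neg_mul, neg_neg]
    exact P.neg_mem (g_mem 4)
  · show a 2 * (a 0 * (a 1 * a 2)) ∈ P
    simp only [a_sq, sq0, sq1, sq2, sq3, sw10x, sw20x, sw30x, sw21x, sw31x, sw32x, sw10, sw20, sw30, sw21, sw31, sw32, mul_assoc, mul_one, one_mul, mul_neg, neg_mul, neg_neg]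
    exact P.neg_mem (g_mem 5)
  · show a 2 * (a 0 * (a 1 * a 3)) ∈ P
    simp only [a_sq, sq0, sq1, sq2, sq3, sw10x, sw20x, sw30x, sw21x, sw31x, sw32x, sw10, sw20, sw30, sw21, sw31, sw32, mul_assoc, mul_one, one_mul, mul_neg, neg_mul, neg_neg]
    exact g_mem 15
  · show a 2 * (a 0 * (a 2 * a 3)) ∈ P
    simp only [a_sq, sq0, sq1, sq2, sq3, sw10x, sw20x, sw30x, sw21x, sw31x, sw32x, sw10, sw20, sw30, sw21, sw31, sw32, mul_assoc, mul_one, one_mul, mul_neg, neg_mul, neg_neg]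
    exact g_mem 7
  · show a 2 * (a 1 * (a 2 * a 3)) ∈ P
    simp only [a_sq, sq0, sq1, sq2, sq3, sw10x, sw20x, sw30x, sw21x, sw31x, sw32x, sw10, sw20, sw30, sw21, sw31, sw32, mul_assoc, mul_one, one_mul, mul_neg, neg_mul, neg_neg]
    exact g_mem 9
  · show a 2 * (a 0 * (a 1 * (a 2 * a 3))) ∈ P
    simp only [a_sq, sq0, sq1, sq2, sq3, sw10x, sw20x, sw30x, sw21x, sw31x, sw32x, sw10, sw20, sw30, sw21, sw31, sw32, mul_assoc, mul_one, one_mul, mul_neg, neg_mul, neg_neg]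
    exact P.neg_mem (g_mem 12)

lemma a3_mul_g_mem (k : Fin 16) : a 3 * g k ∈ P := by
  fin_cases k
  · show a 3 * (1) ∈ P
    simp only [a_sq, sq0, sq1, sq2, sq3, sw10x, sw20x, sw30x, sw21x, sw31x, sw32x, sw10, sw20, sw30, sw21, sw31, sw32, mul_assoc, mul_one, one_mul, mul_neg, neg_mul, neg_neg]
    exact g_mem 4
  · show a 3 * (a 0) ∈ P
    simp only [a_sq, sq0, sq1, sq2, sq3, sw10x, sw20x, sw30x, sw21x, sw31x, sw32x, sw10, sw20, sw30, sw21, sw31, sw32, mul_assoc, mul_one, one_mul, mul_neg, neg_mul, neg_neg]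
    exact P.neg_mem (g_mem 7)
  · show a 3 * (a 1) ∈ P
    simp only [a_sq, sq0, sq1, sq2, sq3, sw10x, sw20x, sw30x, sw21x, sw31x, sw32x, sw10, sw20, sw30, sw21, sw31, sw32, mul_assoc, mul_one, one_mul, mul_neg, neg_mul, neg_neg]
    exact P.neg_mem (g_mem 9)
  · show a 3 * (a 2) ∈ P
    simp only [a_sq, sq0, sq1, sq2, sq3, sw10x, sw20x, sw30x, sw21x, sw31x, sw32x, sw10, sw20, sw30, sw21, sw31, sw32, mul_assoc, mul_one, one_mul, mul_neg, neg_mul, neg_neg]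
    exact P.neg_mem (g_mem 10)
  · show a 3 * (a 3) ∈ P
    simp only [a_sq, sq0, sq1, sq2, sq3, sw10x, sw20x, sw30x, sw21x, sw31x, sw32x, sw10, sw20, sw30, sw21, sw31, sw32, mul_assoc, mul_one, one_mul, mul_neg, neg_mul, neg_neg]
    exact P.neg_mem (g_mem 0)
  · show a 3 * (a 0 * a 1) ∈ P
    simp only [a_sq, sq0, sq1, sq2, sq3, sw10x, sw20x, sw30x, sw21x, sw31x, sw32x, sw10, sw20, sw30, sw21, sw31, sw32, mul_assoc, mul_one, one_mul, mul_neg, neg_mul, neg_neg]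
    exact g_mem 12
  · show a 3 * (a 0 * a 2) ∈ P
    simp only [a_sq, sq0, sq1, sq2, sq3, sw10x, sw20x, sw30x, sw21x, sw31x, sw32x, sw10, sw20, sw30, sw21, sw31, sw32, mul_assoc, mul_one, one_mul, mul_neg, neg_mul, neg_neg]
    exact g_mem 13
  · show a 3 * (a 0 * a 3) ∈ P
    simp only [a_sq, sq0, sq1, sq2, sq3, sw10x, sw20x, sw30x, sw21x, sw31x, sw32x, sw10, sw20, sw30, sw21, sw31, sw32, mul_assoc, mul_one, one_mul, mul_neg, neg_mul, neg_neg]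
    exact g_mem 1
  · show a 3 * (a 1 * a 2) ∈ P
    simp only [a_sq, sq0, sq1, sq2, sq3, sw10x, sw20x, sw30x, sw21x, sw31x, sw32x, sw10, sw20, sw30, sw21, sw31, sw32, mul_assoc, mul_one, one_mul, mul_neg, neg_mul, neg_neg]
    exact g_mem 14
  · show a 3 * (a 1 * a 3) ∈ P
    simp only [a_sq, sq0, sq1, sq2, sq3, sw10x, sw20x, sw30x, sw21x, sw31x, sw32x, sw10, sw20, sw30, sw21, sw31, sw32, mul_assoc, mul_one, one_mul, mul_neg, neg_mul, neg_neg]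
    exact g_mem 2
  · show a 3 * (a 2 * a 3) ∈ P
    simp only [a_sq, sq0, sq1, sq2, sq3, sw10x, sw20x, sw30x, sw21x, sw31x, sw32x, sw10, sw20, sw30, sw21, sw31, sw32, mul_assoc, mul_one, one_mul, mul_neg, neg_mul, neg_neg]
    exact g_mem 3
  · show a 3 * (a 0 * (a 1 * a 2)) ∈ P
    simp only [a_sq, sq0, sq1, sq2, sq3, sw10x, sw20x, sw30x, sw21x, sw31x, sw32x, sw10, sw20, sw30, sw21, sw31, sw32, mul_assoc, mul_one, one_mul, mul_neg, neg_mul, neg_neg]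
    exact P.neg_mem (g_mem 15)
  · show a 3 * (a 0 * (a 1 * a 3)) ∈ P
    simp only [a_sq, sq0, sq1, sq2, sq3, sw10x, sw20x, sw30x, sw21x, sw31x, sw32x, sw10, sw20, sw30, sw21, sw31, sw32, mul_assoc, mul_one, one_mul, mul_neg, neg_mul, neg_neg]
    exact P.neg_mem (g_mem 5)
  · show a 3 * (a 0 * (a 2 * a 3)) ∈ P
    simp only [a_sq, sq0, sq1, sq2, sq3, sw10x, sw20x, sw30x, sw21x, sw31x, sw32x, sw10, sw20, sw30, sw21, sw31, sw32, mul_assoc, mul_one, one_mul, mul_neg, neg_mul, neg_neg]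
    exact P.neg_mem (g_mem 6)
  · show a 3 * (a 1 * (a 2 * a 3)) ∈ P
    simp only [a_sq, sq0, sq1, sq2, sq3, sw10x, sw20x, sw30x, sw21x, sw31x, sw32x, sw10, sw20, sw30, sw21, sw31, sw32, mul_assoc, mul_one, one_mul, mul_neg, neg_mul, neg_neg]
    exact P.neg_mem (g_mem 8)
  · show a 3 * (a 0 * (a 1 * (a 2 * a 3))) ∈ P
    simp only [a_sq, sq0, sq1, sq2, sq3, sw10x, sw20x, sw30x, sw21x, sw31x, sw32x, sw10, sw20, sw30, sw21, sw31, sw32, mul_assoc, mul_one, one_mul, mul_neg, neg_mul, neg_neg]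
    exact g_mem 11

lemma a_mul_g_mem (i : Fin 4) (k : Fin 16) : a i * g k ∈ P := by
  fin_cases i
  · exact a0_mul_g_mem k
  · exact a1_mul_g_mem k
  · exact a2_mul_g_mem k
  · exact a3_mul_g_mem k

lemma a_mul_mem (i : Fin 4) {x : CliffordAlgebra Qneg} (hx : x ∈ P) : a i * x ∈ P := by
  induction hx using Submodule.span_induction with
  | mem x hx => obtain ⟨k, rfl⟩ := hx; exact a_mul_g_mem i k
  | zero => simpa using P.zero_mem
  | add x y _ _ hx hy => rw [mul_add]; exact P.add_mem hx hy
  | smul c x _ hx => rw [mul_smul_comm]; exact P.smul_mem c hx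

lemma g_mul_mem (k : Fin 16) {y : CliffordAlgebra Qneg} (hy : y ∈ P) : g k * y ∈ P := by
  fin_cases k
  · show (1 : CliffordAlgebra Qneg) * y ∈ P
    rw [one_mul]; exact hy
  · show (a 0) * y ∈ P
    exact a_mul_mem 0 hy
  · show (a 1) * y ∈ P
    exact a_mul_mem 1 hy
  · show (a 2) * y ∈ P
    exact a_mul_mem 2 hy
  · show (a 3) * y ∈ P
    exact a_mul_mem 3 hy
  · show (a 0 * a 1) * y ∈ P
    simp only [mul_assoc]
    exact a_mul_mem 0 (a_mul_mem 1 hy)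
  · show (a 0 * a 2) * y ∈ P
    simp only [mul_assoc]
    exact a_mul_mem 0 (a_mul_mem 2 hy)
  · show (a 0 * a 3) * y ∈ P
    simp only [mul_assoc]
    exact a_mul_mem 0 (a_mul_mem 3 hy)
  · show (a 1 * a 2) * y ∈ P
    simp only [mul_assoc]
    exact a_mul_mem 1 (a_mul_mem 2 hy)
  · show (a 1 * a 3) * y ∈ P
    simp only [mul_assoc]
    exact a_mul_mem 1 (a_mul_mem 3 hy)
  · show (a 2 * a 3) * y ∈ P
    simp only [mul_assoc]
    exact a_mul_mem 2 (a_mul_mem 3 hy)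
  · show (a 0 * (a 1 * a 2)) * y ∈ P
    simp only [mul_assoc]
    exact a_mul_mem 0 (a_mul_mem 1 (a_mul_mem 2 hy))
  · show (a 0 * (a 1 * a 3)) * y ∈ P
    simp only [mul_assoc]
    exact a_mul_mem 0 (a_mul_mem 1 (a_mul_mem 3 hy))
  · show (a 0 * (a 2 * a 3)) * y ∈ P
    simp only [mul_assoc]
    exact a_mul_mem 0 (a_mul_mem 2 (a_mul_mem 3 hy))
  · show (a 1 * (a 2 * a 3)) * y ∈ P
    simp only [mul_assoc]
    exact a_mul_mem 1 (a_mul_mem 2 (a_mul_mem 3 hy))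
  · show (a 0 * (a 1 * (a 2 * a 3))) * y ∈ P
    simp only [mul_assoc]
    exact a_mul_mem 0 (a_mul_mem 1 (a_mul_mem 2 (a_mul_mem 3 hy)))

lemma mul_mem_P {x y : CliffordAlgebra Qneg} (hx : x ∈ P) (hy : y ∈ P) : x * y ∈ P := by
  induction hx using Submodule.span_induction with
  | mem x hx => obtain ⟨k, rfl⟩ := hx; exact g_mul_mem k hy
  | zero => simpa using P.zero_mem
  | add x z _ _ hx hz => rw [add_mul]; exact P.add_mem hx hz
  | smul c x _ hx => rw [smul_mul_assoc]; exact P.smul_mem c hx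

lemma one_mem_P : (1 : CliffordAlgebra Qneg) ∈ P := g_mem 0

lemma iota_expand (v : EuclideanSpace ℝ (Fin 4)) :
    ι Qneg v = ∑ i, v i • a i := by
  have hv : v = ∑ i, v i • ee i := by
    ext j
    rw [WithLp.ofLp_sum, Finset.sum_apply]
    have : ∀ i, (v i • ee i) j = v i * ee i j := fun i => rfl
    simp [this, ee_apply]
  conv_lhs => rw [hv]
  simp [a]

lemma ι_mem_P (v : EuclideanSpace ℝ (Fin 4)) : ι Qneg v ∈ P := by
  rw [iota_expand]
  have ha : ∀ i : Fin 4, a i ∈ P := by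
    intro i; fin_cases i
    exacts [g_mem 1, g_mem 2, g_mem 3, g_mem 4]
  exact Submodule.sum_mem _ fun i _ => P.smul_mem _ (ha i)

lemma P_eq_top : P = ⊤ := by
  rw [eq_top_iff]
  intro x _
  induction x using CliffordAlgebra.induction with
  | algebraMap r => rw [Algebra.algebraMap_eq_smul_one]; exact P.smul_mem r one_mem_P
  | ι v => exact ι_mem_P v
  | mul x y hx hy => exact mul_mem_P (hx trivial) (hy trivial)
  | add x y hx hy => exact P.add_mem (hx trivial) (hy trivial)

lemma span_range_g : Submodule.span ℝ (Set.range g) = ⊤ := P_eq_top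

instance : Module.Finite ℝ (CliffordAlgebra Qneg) :=
  ⟨(Submodule.fg_def).2 ⟨Set.range g, Set.finite_range g, span_range_g⟩⟩

lemma finrank_le : Module.finrank ℝ (CliffordAlgebra Qneg) ≤ 16 := by
  simpa using finrank_le_of_span_eq_top span_range_g

lemma F_a (i : Fin 4) : F (a i) = γ i := by
  rw [a, F, CliffordAlgebra.lift_ι_apply]
  show ∑ j, ee i j • γ j = γ i
  simp [ee_apply, Finset.sum_ite_eq]

def Fg : Fin 16 → M2H :=
  ![1, !![0, 1; -1, 0], !![0, qI; qI, 0], !![0, qJ; qJ, 0], !![0, qK; qK, 0], !![qI, 0; 0, -qI], !![qJ, 0; 0, -qJ], !![qK, 0; 0, -qK], !![qK, 0; 0, qK], !![-qJ, 0; 0, -qJ], !![qI, 0; 0, qI], !![0, qK; -qK, 0], !![0, -qJ; qJ, 0], !![0, qI; -qI, 0], !![0, -1; -1, 0], !![-1, 0; 0, 1]]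

set_option maxHeartbeats 2000000 in
lemma F_g (k : Fin 16) : F (g k) = Fg k := by
  fin_cases k
  · show F (1) = (1 : M2H)
    simp only [_root_.map_mul, _root_.map_one, F_a]
  · show F (a 0) = (!![0, 1; -1, 0] : M2H)
    simp only [_root_.map_mul, _root_.map_one, F_a]
    refine Matrix.ext fun i j => ?_
    fin_cases i <;> fin_cases j <;>
      · apply QuaternionAlgebra.ext <;>
          simp [γ, Matrix.mul_apply, Fin.sum_univ_two] <;> simp [qI, qJ, qK]
  · show F (a 1) = (!![0, qI; qI, 0] : M2H)
    simp only [_root_.map_mul, _root_.map_one, F_a]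
    refine Matrix.ext fun i j => ?_
    fin_cases i <;> fin_cases j <;>
      · apply QuaternionAlgebra.ext <;>
          simp [γ, Matrix.mul_apply, Fin.sum_univ_two] <;> simp [qI, qJ, qK]
  · show F (a 2) = (!![0, qJ; qJ, 0] : M2H)
    simp only [_root_.map_mul, _root_.map_one, F_a]
    refine Matrix.ext fun i j => ?_
    fin_cases i <;> fin_cases j <;>
      · apply QuaternionAlgebra.ext <;>
          simp [γ, Matrix.mul_apply, Fin.sum_univ_two] <;> simp [qI, qJ, qK]
  · show F (a 3) = (!![0, qK; qK, 0] : M2H)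
    simp only [_root_.map_mul, _root_.map_one, F_a]
    refine Matrix.ext fun i j => ?_
    fin_cases i <;> fin_cases j <;>
      · apply QuaternionAlgebra.ext <;>
          simp [γ, Matrix.mul_apply, Fin.sum_univ_two] <;> simp [qI, qJ, qK]
  · show F (a 0 * a 1) = (!![qI, 0; 0, -qI] : M2H)
    simp only [_root_.map_mul, _root_.map_one, F_a]
    refine Matrix.ext fun i j => ?_
    fin_cases i <;> fin_cases j <;>
      · apply QuaternionAlgebra.ext <;>
          simp [γ, Matrix.mul_apply, Fin.sum_univ_two] <;> simp [qI, qJ, qK]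
  · show F (a 0 * a 2) = (!![qJ, 0; 0, -qJ] : M2H)
    simp only [_root_.map_mul, _root_.map_one, F_a]
    refine Matrix.ext fun i j => ?_
    fin_cases i <;> fin_cases j <;>
      · apply QuaternionAlgebra.ext <;>
          simp [γ, Matrix.mul_apply, Fin.sum_univ_two] <;> simp [qI, qJ, qK]
  · show F (a 0 * a 3) = (!![qK, 0; 0, -qK] : M2H)
    simp only [_root_.map_mul, _root_.map_one, F_a]
    refine Matrix.ext fun i j => ?_
    fin_cases i <;> fin_cases j <;>
      · apply QuaternionAlgebra.ext <;>
          simp [γ, Matrix.mul_apply, Fin.sum_univ_two] <;> simp [qI, qJ, qK]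
  · show F (a 1 * a 2) = (!![qK, 0; 0, qK] : M2H)
    simp only [_root_.map_mul, _root_.map_one, F_a]
    refine Matrix.ext fun i j => ?_
    fin_cases i <;> fin_cases j <;>
      · apply QuaternionAlgebra.ext <;>
          simp [γ, Matrix.mul_apply, Fin.sum_univ_two] <;> simp [qI, qJ, qK]
  · show F (a 1 * a 3) = (!![-qJ, 0; 0, -qJ] : M2H)
    simp only [_root_.map_mul, _root_.map_one, F_a]
    refine Matrix.ext fun i j => ?_
    fin_cases i <;> fin_cases j <;>
      · apply QuaternionAlgebra.ext <;>
          simp [γ, Matrix.mul_apply, Fin.sum_univ_two] <;> simp [qI, qJ, qK]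
  · show F (a 2 * a 3) = (!![qI, 0; 0, qI] : M2H)
    simp only [_root_.map_mul, _root_.map_one, F_a]
    refine Matrix.ext fun i j => ?_
    fin_cases i <;> fin_cases j <;>
      · apply QuaternionAlgebra.ext <;>
          simp [γ, Matrix.mul_apply, Fin.sum_univ_two] <;> simp [qI, qJ, qK]
  · show F (a 0 * (a 1 * a 2)) = (!![0, qK; -qK, 0] : M2H)
    simp only [_root_.map_mul, _root_.map_one, F_a]
    refine Matrix.ext fun i j => ?_
    fin_cases i <;> fin_cases j <;>
      · apply QuaternionAlgebra.ext <;>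
          simp [γ, Matrix.mul_apply, Fin.sum_univ_two] <;> simp [qI, qJ, qK]
  · show F (a 0 * (a 1 * a 3)) = (!![0, -qJ; qJ, 0] : M2H)
    simp only [_root_.map_mul, _root_.map_one, F_a]
    refine Matrix.ext fun i j => ?_
    fin_cases i <;> fin_cases j <;>
      · apply QuaternionAlgebra.ext <;>
          simp [γ, Matrix.mul_apply, Fin.sum_univ_two] <;> simp [qI, qJ, qK]
  · show F (a 0 * (a 2 * a 3)) = (!![0, qI; -qI, 0] : M2H)
    simp only [_root_.map_mul, _root_.map_one, F_a]
    refine Matrix.ext fun i j => ?_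
    fin_cases i <;> fin_cases j <;>
      · apply QuaternionAlgebra.ext <;>
          simp [γ, Matrix.mul_apply, Fin.sum_univ_two] <;> simp [qI, qJ, qK]
  · show F (a 1 * (a 2 * a 3)) = (!![0, -1; -1, 0] : M2H)
    simp only [_root_.map_mul, _root_.map_one, F_a]
    refine Matrix.ext fun i j => ?_
    fin_cases i <;> fin_cases j <;>
      · apply QuaternionAlgebra.ext <;>
          simp [γ, Matrix.mul_apply, Fin.sum_univ_two] <;> simp [qI, qJ, qK]
  · show F (a 0 * (a 1 * (a 2 * a 3))) = (!![-1, 0; 0, 1] : M2H)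
    simp only [_root_.map_mul, _root_.map_one, F_a]
    refine Matrix.ext fun i j => ?_
    fin_cases i <;> fin_cases j <;>
      · apply QuaternionAlgebra.ext <;>
          simp [γ, Matrix.mul_apply, Fin.sum_univ_two] <;> simp [qI, qJ, qK]

lemma Fg_0 : Fg 0 = (1 : M2H) := rfl
lemma Fg_1 : Fg 1 = (!![0, 1; -1, 0] : M2H) := rfl
lemma Fg_2 : Fg 2 = (!![0, qI; qI, 0] : M2H) := rfl
lemma Fg_3 : Fg 3 = (!![0, qJ; qJ, 0] : M2H) := rfl
lemma Fg_4 : Fg 4 = (!![0, qK; qK, 0] : M2H) := rfl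
lemma Fg_5 : Fg 5 = (!![qI, 0; 0, -qI] : M2H) := rfl
lemma Fg_6 : Fg 6 = (!![qJ, 0; 0, -qJ] : M2H) := rfl
lemma Fg_7 : Fg 7 = (!![qK, 0; 0, -qK] : M2H) := rfl
lemma Fg_8 : Fg 8 = (!![qK, 0; 0, qK] : M2H) := rfl
lemma Fg_9 : Fg 9 = (!![-qJ, 0; 0, -qJ] : M2H) := rfl
lemma Fg_10 : Fg 10 = (!![qI, 0; 0, qI] : M2H) := rfl
lemma Fg_11 : Fg 11 = (!![0, qK; -qK, 0] : M2H) := rfl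
lemma Fg_12 : Fg 12 = (!![0, -qJ; qJ, 0] : M2H) := rfl
lemma Fg_13 : Fg 13 = (!![0, qI; -qI, 0] : M2H) := rfl
lemma Fg_14 : Fg 14 = (!![0, -1; -1, 0] : M2H) := rfl
lemma Fg_15 : Fg 15 = (!![-1, 0; 0, 1] : M2H) := rfl

lemma Fg_mem (k : Fin 16) : Fg k ∈ F.range := ⟨g k, F_g k⟩

set_option maxHeartbeats 2000000 in
lemma decomp (M : M2H) :
    M = (2⁻¹ * ((M 0 0).re + (M 1 1).re)) • Fg 0
      + (2⁻¹ * ((M 0 1).re - (M 1 0).re)) • Fg 1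
      + (2⁻¹ * ((M 0 1).imI + (M 1 0).imI)) • Fg 2
      + (2⁻¹ * ((M 0 1).imJ + (M 1 0).imJ)) • Fg 3
      + (2⁻¹ * ((M 0 1).imK + (M 1 0).imK)) • Fg 4
      + (2⁻¹ * ((M 0 0).imI - (M 1 1).imI)) • Fg 5
      + (2⁻¹ * ((M 0 0).imJ - (M 1 1).imJ)) • Fg 6
      + (2⁻¹ * ((M 0 0).imK - (M 1 1).imK)) • Fg 7
      + (2⁻¹ * ((M 0 0).imK + (M 1 1).imK)) • Fg 8
      + (-(2⁻¹ * ((M 0 0).imJ + (M 1 1).imJ))) • Fg 9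
      + (2⁻¹ * ((M 0 0).imI + (M 1 1).imI)) • Fg 10
      + (2⁻¹ * ((M 0 1).imK - (M 1 0).imK)) • Fg 11
      + (2⁻¹ * ((M 1 0).imJ - (M 0 1).imJ)) • Fg 12
      + (2⁻¹ * ((M 0 1).imI - (M 1 0).imI)) • Fg 13
      + (-(2⁻¹ * ((M 0 1).re + (M 1 0).re))) • Fg 14
      + (2⁻¹ * ((M 1 1).re - (M 0 0).re)) • Fg 15 := by
  refine Matrix.ext fun i j => ?_
  fin_cases i <;> fin_cases j <;>
    · apply QuaternionAlgebra.ext <;>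
        · simp [Fg_0, Fg_1, Fg_2, Fg_3, Fg_4, Fg_5, Fg_6, Fg_7, Fg_8, Fg_9, Fg_10,
            Fg_11, Fg_12, Fg_13, Fg_14, Fg_15] <;> simp [qI, qJ, qK] <;> ring

lemma F_surjective : Function.Surjective F := by
  intro M
  have hM : M ∈ F.range := by
    rw [decomp M]
    repeat' refine add_mem ?_ ?_
    all_goals exact Subalgebra.smul_mem _ (Fg_mem _) _
  exact hM

lemma finrank_M2H : Module.finrank ℝ M2H = 16 := by
  rw [Module.finrank_matrix]
  simp [Quaternion.finrank_eq_four]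

lemma finrank_Cl : Module.finrank ℝ (CliffordAlgebra Qneg) = 16 := by
  refine le_antisymm finrank_le ?_
  have h := LinearMap.finrank_range_le F.toLinearMap
  have hr : LinearMap.range F.toLinearMap = ⊤ := LinearMap.range_eq_top.2 F_surjective
  rw [hr, finrank_top, finrank_M2H] at h
  exact h

lemma F_bijective : Function.Bijective F := by
  refine ⟨?_, F_surjective⟩
  have h : Function.Injective F.toLinearMap :=
    (LinearMap.injective_iff_surjective_of_finrank_eq_finrank
      (by rw [finrank_Cl, finrank_M2H])).2 F_surjective
  exact h

end CliffR4

/-- The Clifford algebra of `ℝ⁴` with the quadratic form `Q(v) = −‖v‖²` (so that the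
generators satisfy `eᵢ² = −1`, `eᵢeⱼ = −eⱼeᵢ` for `i ≠ j`) is isomorphic as an ℝ-algebra to
the algebra `M₂(ℍ)` of 2×2 quaternion matrices. -/
theorem clifford_R4_iso_M2H :
    (∀ v : EuclideanSpace ℝ (Fin 4), Qneg v = -‖v‖ ^ 2) ∧
    Nonempty (CliffordAlgebra Qneg ≃ₐ[ℝ] Matrix (Fin 2) (Fin 2) ℍ[ℝ]) :=
  ⟨CliffR4.Qneg_norm, ⟨AlgEquiv.ofBijective CliffR4.F CliffR4.F_bijective⟩⟩

end
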